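/- Suppose Condition (2) holds: ∑_{i=1}^∞ w̃_i = ∞ and ∑_{i=1}^∞ w̃_i² < ∞, and there are no misbehaving ratings. Then for every estimation error ε ∈ [0,1], every m ∈ 𝓜, and every i ≥ 1, one has P[ |β_{i,m} − α_m| > ε ] ≤ 2·exp( −φ_i·ε² ). -/

import Mathlib

open MeasureTheory Filter

/-- Cumulative weight `∑_{j=1}^i w_j`. -/
noncomputable def Sw (w : ℕ → ℝ) (i : ℕ) : ℝ := ∑ j ∈ Finset.Icc 1 i, w j

/-- Normalized weight `w̃_i = w_i / ∑_{j=1}^i w_j`. -/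
noncomputable def wnorm (w : ℕ → ℝ) (i : ℕ) : ℝ := w i / Sw w i

/-- Historical collective opinion
`β_{i,m} = (∑_{j=1}^i w_j 1{R_j = m}) / (∑_{j=1}^i w_j)`. -/
noncomputable def betaH {Ω : Type*} (w : ℕ → ℝ) (R : ℕ → Ω → ℕ) (i m : ℕ) (ω : Ω) : ℝ :=
  (∑ j ∈ Finset.Icc 1 i, w j * (if R j ω = m then (1 : ℝ) else 0)) / Sw w i

/-- `𝓗_i`: the σ-algebra generated by `R_1, …, R_i` (trivial for `i = 0`). -/
def Hsig {Ω : Type*} (R : ℕ → Ω → ℕ) (i : ℕ) : MeasurableSpace Ω :=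
  ⨆ j ∈ Finset.Icc 1 i, MeasurableSpace.comap (R j) ⊤

/-- `ϕ_j = ∏_{ℓ=1}^j [1 − w̃_{ℓ+1} (1 − γ_ℓ + η_ℓ γ_ℓ)]` (with `ϕ_0 = 1`),
where `wt` is the sequence of normalized weights. -/
noncomputable def varphi (wt γ η : ℕ → ℝ) (j : ℕ) : ℝ :=
  ∏ ℓ ∈ Finset.Icc 1 j, (1 - wt (ℓ + 1) * (1 - γ ℓ + η ℓ * γ ℓ))

/-- Convergence-speed metric `φ_i = 1 / ((ϕ_{i−1}²/2) · ∑_{j=1}^i w̃_j²/ϕ_{j−1}²)`. -/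
noncomputable def phiSpeed (wt γ η : ℕ → ℝ) (i : ℕ) : ℝ :=
  1 / ((varphi wt γ η (i - 1)) ^ 2 / 2 *
    ∑ j ∈ Finset.Icc 1 i, (wt j) ^ 2 / (varphi wt γ η (j - 1)) ^ 2)

lemma hoeff_deriv1 (p t : ℝ) (hp0 : 0 < p) (hp1 : p < 1) :
    HasDerivAt (fun t => Real.log (1 - p + p * Real.exp t))
      (p * Real.exp t / (1 - p + p * Real.exp t)) t := by
  have hD : 0 < 1 - p + p * Real.exp t := by nlinarith [Real.exp_pos t]
  have h1 : HasDerivAt (fun t => 1 - p + p * Real.exp t) (p * Real.exp t) t := by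
    simpa using ((Real.hasDerivAt_exp t).const_mul p).const_add (1 - p)
  exact h1.log hD.ne'

lemma hoeff_deriv2 (p t : ℝ) (hp0 : 0 < p) (hp1 : p < 1) :
    HasDerivAt (fun t => p * Real.exp t / (1 - p + p * Real.exp t))
      (p * Real.exp t / (1 - p + p * Real.exp t)
        - (p * Real.exp t / (1 - p + p * Real.exp t))^2) t := by
  have hD : 0 < 1 - p + p * Real.exp t := by nlinarith [Real.exp_pos t]
  have h1 : HasDerivAt (fun t => 1 - p + p * Real.exp t) (p * Real.exp t) t := by
    simpa using ((Real.hasDerivAt_exp t).const_mul p).const_add (1 - p)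
  have h2 : HasDerivAt (fun t => p * Real.exp t) (p * Real.exp t) t :=
    (Real.hasDerivAt_exp t).const_mul p
  have := h2.div h1 hD.ne'
  refine this.congr_deriv ?_
  field_simp

lemma hoeff_core (p : ℝ) (hp0 : 0 < p) (hp1 : p < 1) (t : ℝ) :
    -t * p + Real.log (1 - p + p * Real.exp t) ≤ t ^ 2 / 8 := by
  set u : ℝ → ℝ := fun s => p * Real.exp s / (1 - p + p * Real.exp s) with hu_def
  have hD : ∀ s : ℝ, 0 < 1 - p + p * Real.exp s := fun s => by nlinarith [Real.exp_pos s]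
  have hu : ∀ s, HasDerivAt u (u s - (u s) ^ 2) s := fun s => hoeff_deriv2 p s hp0 hp1
  have hurange : ∀ s, 0 < u s ∧ u s < 1 := by
    intro s
    have h1 : 0 < p * Real.exp s := by positivity
    constructor
    · exact div_pos h1 (hD s)
    · rw [div_lt_one (hD s)]; nlinarith [Real.exp_pos s]
  have hu0 : u 0 = p := by simp [hu_def]
  -- q is monotone
  have hq : ∀ s, HasDerivAt (fun s => s / 4 - u s) (1 / 4 - (u s - (u s) ^ 2)) s := by
    intro s
    exact ((hasDerivAt_id s).div_const 4).sub (hu s)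
  have hqmono : Monotone (fun s => s / 4 - u s) := by
    apply monotone_of_deriv_nonneg
    · intro s; exact (hq s).differentiableAt
    · intro s
      rw [(hq s).deriv]
      obtain ⟨h1, h2⟩ := hurange s
      nlinarith [sq_nonneg (u s - 1/2)]
  -- bounds on u s - p
  have hub1 : ∀ s, 0 ≤ s → u s - p ≤ s / 4 := by
    intro s hs
    have := hqmono hs
    simp only [hu0] at this ⊢
    linarith [this, hu0]
  have hub2 : ∀ s, s ≤ 0 → s / 4 ≤ u s - p := by
    intro s hs
    have := hqmono hs
    simp only at this
    rw [hu0] at this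
    linarith
  -- r
  set g : ℝ → ℝ := fun s => -s * p + Real.log (1 - p + p * Real.exp s) with hg_def
  have hg : ∀ s, HasDerivAt g (u s - p) s := by
    intro s
    have h1 : HasDerivAt (fun s : ℝ => -s * p) (-p) s := by
      simpa [neg_one_mul] using ((hasDerivAt_id s).neg.mul_const p)
    have h2 := h1.add (hoeff_deriv1 p s hp0 hp1)
    rw [show u s - p = -p + p * Real.exp s / (1 - p + p * Real.exp s) by rw [hu_def]; ring]
    exact h2
  have hr : ∀ s, HasDerivAt (fun s => s ^ 2 / 8 - g s) (s / 4 - (u s - p)) s := by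
    intro s
    have h1 : HasDerivAt (fun s : ℝ => s ^ 2 / 8) (s / 4) s := by
      have := (hasDerivAt_pow 2 s).div_const 8
      simpa using this.congr_deriv (by ring)
    exact h1.sub (hg s)
  have hr0 : (fun s => s ^ 2 / 8 - g s) 0 = 0 := by simp [hg_def]
  rcases le_or_gt 0 t with ht | ht
  · have hmono : MonotoneOn (fun s => s ^ 2 / 8 - g s) (Set.Ici 0) := by
      apply monotoneOn_of_deriv_nonneg (convex_Ici 0)
      · exact (Continuous.continuousOn (by
          exact continuous_iff_continuousAt.2 fun s => ((hr s).differentiableAt).continuousAt))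
      · intro s _; exact ((hr s).differentiableAt).differentiableWithinAt
      · intro s hs
        rw [interior_Ici] at hs
        rw [(hr s).deriv]
        have := hub1 s (le_of_lt hs)
        linarith
    have := hmono (Set.self_mem_Ici) (Set.mem_Ici.2 ht) ht
    rw [hr0] at this
    linarith
  · have hanti : AntitoneOn (fun s => s ^ 2 / 8 - g s) (Set.Iic 0) := by
      apply antitoneOn_of_deriv_nonpos (convex_Iic 0)
      · exact (Continuous.continuousOn (by
          exact continuous_iff_continuousAt.2 fun s => ((hr s).differentiableAt).continuousAt))
      · intro s _; exact ((hr s).differentiableAt).differentiableWithinAt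
      · intro s hs
        rw [interior_Iic] at hs
        rw [(hr s).deriv]
        have := hub2 s (le_of_lt hs)
        linarith
    have := hanti (Set.mem_Iic.2 ht.le) (Set.self_mem_Iic) ht.le
    rw [hr0] at this
    linarith

lemma bern_mgf (p t : ℝ) (hp : p ∈ Set.Icc (0:ℝ) 1) :
    p * Real.exp (t * (1 - p)) + (1 - p) * Real.exp (-(t * p)) ≤ Real.exp (t ^ 2 / 8) := by
  obtain ⟨hp0, hp1⟩ := hp
  rcases eq_or_lt_of_le hp0 with h0 | h0
  · simp [← h0]
    positivity
  rcases eq_or_lt_of_le hp1 with h1 | h1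
  · simp [h1]
    positivity
  have hD : 0 < 1 - p + p * Real.exp t := by nlinarith [Real.exp_pos t]
  have key : p * Real.exp (t * (1 - p)) + (1 - p) * Real.exp (-(t * p))
      = Real.exp (-t * p + Real.log (1 - p + p * Real.exp t)) := by
    rw [Real.exp_add, Real.exp_log hD]
    rw [show t * (1 - p) = t + -(t * p) by ring, Real.exp_add]
    rw [show -t * p = -(t * p) by ring]
    ring
  rw [key]
  exact Real.exp_le_exp.2 (hoeff_core p h0 h1 t)
section Base
variable {Ω : Type*} (w : ℕ → ℝ)
variable (γ η : ℕ → ℝ) (R : ℕ → Ω → ℕ) (m : ℕ)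

lemma Sw_pos (hw : ∀ j, 0 ≤ w j) (hw1 : 0 < w 1) : ∀ i, 1 ≤ i → 0 < Sw w i := by
  intro i hi
  have h1 : w 1 ≤ Sw w i := by
    apply Finset.single_le_sum (fun j _ => hw j)
    simp [Finset.mem_Icc]; omega
  linarith

lemma Sw_succ (i : ℕ) : Sw w (i + 1) = Sw w i + w (i + 1) :=
  Finset.sum_Icc_succ_top (by omega) _

lemma wnorm_one (hw1 : 0 < w 1) : wnorm w 1 = 1 := by
  have : Sw w 1 = w 1 := by simp [Sw]
  rw [wnorm, this, div_self (ne_of_gt hw1)]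

lemma wnorm_nonneg (hw : ∀ j, 0 ≤ w j) (hw1 : 0 < w 1) (i : ℕ) (hi : 1 ≤ i) : 0 ≤ wnorm w i :=
  div_nonneg (hw i) (Sw_pos w hw hw1 i hi).le

lemma wnorm_succ_lt_one (hw : ∀ j, 0 ≤ w j) (hw1 : 0 < w 1) (i : ℕ) (hi : 1 ≤ i) : wnorm w (i + 1) < 1 := by
  have hS := Sw_pos w hw hw1 i hi
  have hS' := Sw_pos w hw hw1 (i + 1) (by omega)
  rw [wnorm, div_lt_one hS', Sw_succ]
  linarith

lemma rho_mem (hw : ∀ j, 0 ≤ w j) (hw1 : 0 < w 1)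
    (hγ : ∀ i, γ i ∈ Set.Icc (0:ℝ) 1) (hη : ∀ i, η i ∈ Set.Icc (0:ℝ) 1) (ℓ : ℕ) (hℓ : 1 ≤ ℓ) :
    0 < 1 - wnorm w (ℓ + 1) * (1 - γ ℓ + η ℓ * γ ℓ) ∧
      1 - wnorm w (ℓ + 1) * (1 - γ ℓ + η ℓ * γ ℓ) ≤ 1 := by
  obtain ⟨hγ0, hγ1⟩ := hγ ℓ
  obtain ⟨hη0, hη1⟩ := hη ℓ
  have hwn0 := wnorm_nonneg w hw hw1 (ℓ + 1) (by omega)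
  have hwn1 := wnorm_succ_lt_one w hw hw1 ℓ hℓ
  have hf0 : 0 ≤ 1 - γ ℓ + η ℓ * γ ℓ := by nlinarith
  have hf1 : 1 - γ ℓ + η ℓ * γ ℓ ≤ 1 := by nlinarith
  constructor
  · nlinarith
  · nlinarith

lemma varphi_pos (hw : ∀ j, 0 ≤ w j) (hw1 : 0 < w 1)
    (hγ : ∀ i, γ i ∈ Set.Icc (0:ℝ) 1) (hη : ∀ i, η i ∈ Set.Icc (0:ℝ) 1) : ∀ j, 0 < varphi (wnorm w) γ η j ∧ varphi (wnorm w) γ η j ≤ 1 := by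
  intro j
  induction j with
  | zero => simp [varphi]
  | succ n ih =>
    rw [varphi, Finset.prod_Icc_succ_top (by omega)]
    rcases Nat.eq_zero_or_pos n with h0 | h0
    · subst h0
      simp only [varphi, show Finset.Icc 1 0 = ∅ from rfl, Finset.prod_empty, one_mul]
      exact rho_mem w γ η hw hw1 hγ hη 1 le_rfl
    · obtain ⟨hρ0, hρ1⟩ := rho_mem w γ η hw hw1 hγ hη (n + 1) (by omega)
      obtain ⟨hφ0, hφ1⟩ := ih
      rw [varphi] at hφ0 hφ1
      constructor
      · positivity
      · nlinarith

lemma varphi_succ (k : ℕ) :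
    varphi (wnorm w) γ η (k + 1) = varphi (wnorm w) γ η k *
      (1 - wnorm w (k + 1 + 1) * (1 - γ (k + 1) + η (k + 1) * γ (k + 1))) := by
  rw [varphi, Finset.prod_Icc_succ_top (by omega), varphi]

lemma betaH_mem (hw : ∀ j, 0 ≤ w j) (hw1 : 0 < w 1) (i : ℕ) (hi : 1 ≤ i) (ω : Ω) :
    betaH w R i m ω ∈ Set.Icc (0:ℝ) 1 := by
  have hS := Sw_pos w hw hw1 i hi
  constructor
  · apply div_nonneg _ hS.le
    apply Finset.sum_nonneg
    intro j _
    have := hw j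
    positivity
  · rw [betaH, div_le_one hS]
    apply Finset.sum_le_sum
    intro j _
    rcases ite_eq_or_eq (R j ω = m) (1:ℝ) 0 with h | h <;> rw [h] <;> simp [hw j]

lemma betaH_one (hw1 : 0 < w 1) (ω : Ω) : betaH w R 1 m ω = if R 1 ω = m then (1:ℝ) else 0 := by
  have : Sw w 1 = w 1 := by simp [Sw]
  rw [betaH, this]
  simp only [show Finset.Icc 1 1 = {1} from rfl, Finset.sum_singleton]
  rw [mul_comm, mul_div_assoc, div_self (ne_of_gt hw1), mul_one]

lemma betaH_succ (hw : ∀ j, 0 ≤ w j) (hw1 : 0 < w 1) (i : ℕ) (hi : 1 ≤ i) (ω : Ω) :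
    betaH w R (i + 1) m ω = (1 - wnorm w (i + 1)) * betaH w R i m ω
      + wnorm w (i + 1) * (if R (i + 1) ω = m then (1:ℝ) else 0) := by
  have hS := Sw_pos w hw hw1 i hi
  have hS' := Sw_pos w hw hw1 (i + 1) (by omega)
  have hSS : Sw w (i + 1) = Sw w i + w (i + 1) := Sw_succ w i
  have hnum : (∑ j ∈ Finset.Icc 1 (i + 1), w j * (if R j ω = m then (1:ℝ) else 0))
      = (∑ j ∈ Finset.Icc 1 i, w j * (if R j ω = m then (1:ℝ) else 0))
        + w (i + 1) * (if R (i + 1) ω = m then (1:ℝ) else 0) :=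
    Finset.sum_Icc_succ_top (by omega) _
  have key : ∀ (N IA S x : ℝ), 0 < S → 0 < S + x →
      (N + x * IA) / (S + x) = (1 - x / (S + x)) * (N / S) + x / (S + x) * IA := by
    intro N IA S x hS hSx
    field_simp
    ring
  rw [hSS] at hS'
  simp only [betaH, wnorm]
  rw [hnum, hSS]
  exact key _ _ _ _ hS hS'

end Base
section Meas
variable {Ω : Type*} [MeasurableSpace Ω]

lemma Hsig_le (R : ℕ → Ω → ℕ) (hRmeas : ∀ i, Measurable (R i)) (i : ℕ) :
    Hsig R i ≤ ‹MeasurableSpace Ω› := by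
  apply iSup₂_le
  intro j _
  exact (hRmeas j).comap_le

lemma measurable_Hsig_R (R : ℕ → Ω → ℕ) {i j : ℕ} (hj : j ∈ Finset.Icc 1 i) :
    Measurable[Hsig R i] (R j) := by
  apply Measurable.of_comap_le
  exact le_iSup₂ (f := fun j _ => MeasurableSpace.comap (R j) (⊤ : MeasurableSpace ℕ)) j hj

lemma measurable_Hsig_ind (R : ℕ → Ω → ℕ) {i j : ℕ} (hj : j ∈ Finset.Icc 1 i) (m : ℕ) :
    Measurable[Hsig R i] (fun ω => if R j ω = m then (1:ℝ) else 0) := by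
  have h1 : Measurable (fun n : ℕ => if n = m then (1:ℝ) else 0) := measurable_from_top
  exact h1.comp (measurable_Hsig_R R hj)

lemma measurable_Hsig_betaH (w : ℕ → ℝ) (R : ℕ → Ω → ℕ) (i m : ℕ) :
    Measurable[Hsig R i] (betaH w R i m) := by
  apply Measurable.div_const
  apply Finset.measurable_sum
  intro j hj
  exact (measurable_Hsig_ind R hj m).const_mul (w j)

lemma measurable_ind (R : ℕ → Ω → ℕ) (hRmeas : ∀ i, Measurable (R i)) (j m : ℕ) :
    Measurable (fun ω => if R j ω = m then (1:ℝ) else 0) := by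
  have h1 : Measurable (fun n : ℕ => if n = m then (1:ℝ) else 0) := measurable_from_top
  exact h1.comp (hRmeas j)

lemma measurable_betaH (w : ℕ → ℝ) (R : ℕ → Ω → ℕ) (hRmeas : ∀ i, Measurable (R i)) (i m : ℕ) :
    Measurable (betaH w R i m) := by
  apply Measurable.div_const
  apply Finset.measurable_sum
  intro j hj
  exact (measurable_ind R hRmeas j m).const_mul (w j)

lemma integrable_bdd (μ : Measure Ω) [IsProbabilityMeasure μ] {f : Ω → ℝ}
    (hf : Measurable f) (C : ℝ) (hC : ∀ ω, |f ω| ≤ C) : Integrable f μ := by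
  refine (integrable_const C).mono' hf.aestronglyMeasurable (ae_of_all _ ?_)
  intro ω
  simpa [Real.norm_eq_abs] using hC ω

end Meas

section MGF
variable {Ω : Type*} [MeasurableSpace Ω]

lemma mgf_bound (μ : Measure Ω) [IsProbabilityMeasure μ]
    (a : ℝ) (ha : a ∈ Set.Icc (0:ℝ) 1) (m : ℕ)
    (R : ℕ → Ω → ℕ) (hRmeas : ∀ i, Measurable (R i))
    (w : ℕ → ℝ) (hw : ∀ j, 0 ≤ w j) (hw1 : 0 < w 1)
    (γ η : ℕ → ℝ) (hγ : ∀ i, γ i ∈ Set.Icc (0:ℝ) 1) (hη : ∀ i, η i ∈ Set.Icc (0:ℝ) 1)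
    (hR1 : μ {ω | R 1 ω = m} = ENNReal.ofReal a)
    (hmodel : ∀ i : ℕ, 1 ≤ i →
      μ[(fun ω => if R (i + 1) ω = m then (1 : ℝ) else 0) | Hsig R i]
        =ᵐ[μ] fun ω => γ i * ((1 - η i) * betaH w R i m ω + η i * a) + (1 - γ i) * a)
    (t : ℝ) :
    ∀ k, 1 ≤ k →
      ∫ ω, Real.exp (t * ((betaH w R k m ω - a) / varphi (wnorm w) γ η (k - 1))) ∂μ
        ≤ Real.exp (t ^ 2 *
            (∑ j ∈ Finset.Icc 1 k, (wnorm w j) ^ 2 / (varphi (wnorm w) γ η (j - 1)) ^ 2) / 8) := by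
  obtain ⟨ha0, ha1⟩ := ha
  intro k hk
  induction k, hk using Nat.le_induction with
  | base =>
    have hφ0 : varphi (wnorm w) γ η 0 = 1 := by simp [varphi]
    have hV : (∑ j ∈ Finset.Icc 1 1, (wnorm w j) ^ 2 / (varphi (wnorm w) γ η (j - 1)) ^ 2) = 1 := by
      simp [show Finset.Icc 1 1 = {1} from rfl, hφ0, wnorm_one w hw1]
    rw [hV]
    have hmeasset : MeasurableSet {ω | R 1 ω = m} := hRmeas 1 (measurableSet_singleton m)
    have hI : ∫ ω, (if R 1 ω = m then (1:ℝ) else 0) ∂μ = a := by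
      have heq : (fun ω => if R 1 ω = m then (1:ℝ) else 0)
          = Set.indicator {ω | R 1 ω = m} 1 := by
        funext ω; simp [Set.indicator_apply, Set.mem_setOf_eq]
      rw [heq, integral_indicator_one hmeasset, measureReal_def, hR1, ENNReal.toReal_ofReal ha0]
    have hpw : ∀ ω, Real.exp (t * ((betaH w R 1 m ω - a) / varphi (wnorm w) γ η 0))
        = (if R 1 ω = m then (1:ℝ) else 0) * Real.exp (t * (1 - a))
          + (1 - (if R 1 ω = m then (1:ℝ) else 0)) * Real.exp (-(t * a)) := by
      intro ω
      rw [betaH_one w R m hw1 ω, hφ0]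
      by_cases h : R 1 ω = m <;> simp [h] <;> ring_nf
    have hIint : Integrable (fun ω => if R 1 ω = m then (1:ℝ) else 0) μ := by
      apply integrable_bdd μ (measurable_ind R hRmeas 1 m) 1
      intro ω; by_cases h : R 1 ω = m <;> simp [h]
    calc ∫ ω, Real.exp (t * ((betaH w R 1 m ω - a) / varphi (wnorm w) γ η (1 - 1))) ∂μ
        = ∫ ω, ((if R 1 ω = m then (1:ℝ) else 0) * Real.exp (t * (1 - a))
            + (1 - (if R 1 ω = m then (1:ℝ) else 0)) * Real.exp (-(t * a))) ∂μ := by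
          exact integral_congr_ae (ae_of_all _ hpw)
      _ = a * Real.exp (t * (1 - a)) + (1 - a) * Real.exp (-(t * a)) := by
          rw [integral_add, integral_mul_const, integral_mul_const, hI]
          · congr 1
            rw [integral_sub (integrable_const 1) hIint, integral_const, hI]
            simp
          · exact hIint.mul_const _
          · exact ((integrable_const 1).sub hIint).mul_const _
      _ ≤ Real.exp (t ^ 2 / 8) := bern_mgf a t ⟨ha0, ha1⟩
      _ = Real.exp (t ^ 2 * 1 / 8) := by ring_nf
  | succ k hk ih =>
    obtain ⟨hφp0, hφp1⟩ := varphi_pos w γ η hw hw1 hγ hη (k - 1)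
    obtain ⟨hφ0, hφ1⟩ := varphi_pos w γ η hw hw1 hγ hη k
    obtain ⟨hρ0, hρ1⟩ := rho_mem w γ η hw hw1 hγ hη k hk
    set φp := varphi (wnorm w) γ η (k - 1) with hφp_def
    set φ := varphi (wnorm w) γ η k with hφ_def
    set ρ := 1 - wnorm w (k + 1) * (1 - γ k + η k * γ k) with hρ_def
    have hφsucc : φ = φp * ρ := by
      obtain ⟨k', rfl⟩ : ∃ k', k = k' + 1 := ⟨k - 1, by omega⟩
      rw [hφ_def, hφp_def, hρ_def]
      simpa using varphi_succ w γ η k'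
    set c := wnorm w (k + 1) / φ with hc_def
    set p : Ω → ℝ := fun ω => γ k * ((1 - η k) * betaH w R k m ω + η k * a) + (1 - γ k) * a
      with hp_def
    set Y : Ω → ℝ := fun ω => (betaH w R k m ω - a) / φp with hY_def
    set Ind : Ω → ℝ := fun ω => if R (k + 1) ω = m then (1 : ℝ) else 0 with hInd_def
    have hbmem : ∀ ω, betaH w R k m ω ∈ Set.Icc (0:ℝ) 1 :=
      fun ω => betaH_mem w R m hw hw1 k hk ω
    have hpmem : ∀ ω, 0 ≤ p ω ∧ p ω ≤ 1 := by
      intro ω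
      obtain ⟨hb0, hb1⟩ := hbmem ω
      obtain ⟨hγ0, hγ1⟩ := hγ k
      obtain ⟨hη0, hη1⟩ := hη k
      have hpω : p ω = γ k * ((1 - η k) * betaH w R k m ω + η k * a) + (1 - γ k) * a := rfl
      rw [hpω]
      constructor
      · nlinarith [mul_nonneg hγ0 (mul_nonneg (by linarith : (0:ℝ) ≤ 1 - η k) hb0),
          mul_nonneg (mul_nonneg hγ0 hη0) ha0,
          mul_nonneg (by linarith : (0:ℝ) ≤ 1 - γ k) ha0]
      · nlinarith [mul_nonneg hγ0 (mul_nonneg (by linarith : (0:ℝ) ≤ 1 - η k) (by linarith : (0:ℝ) ≤ 1 - betaH w R k m ω)),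
          mul_nonneg (mul_nonneg hγ0 hη0) (by linarith : (0:ℝ) ≤ 1 - a),
          mul_nonneg (by linarith : (0:ℝ) ≤ 1 - γ k) (by linarith : (0:ℝ) ≤ 1 - a)]
    have hYbd : ∀ ω, |Y ω| ≤ 1 / φp := by
      intro ω
      obtain ⟨hb0, hb1⟩ := hbmem ω
      rw [hY_def, abs_div, abs_of_pos hφp0, div_le_div_iff_of_pos_right hφp0]
      rw [abs_le]; constructor <;> nlinarith
    have hIndmem : ∀ ω, Ind ω = 0 ∨ Ind ω = 1 := by
      intro ω; by_cases h : R (k + 1) ω = m <;> simp [hInd_def, h]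
    -- algebraic identity
    have alg : ∀ b J : ℝ, ((1 - wnorm w (k + 1)) * b + wnorm w (k + 1) * J - a) / φ
        = (b - a) / φp
          + c * (J - (γ k * ((1 - η k) * b + η k * a) + (1 - γ k) * a)) := by
      intro b J
      rw [hc_def, hφsucc]
      have h1 : φp ≠ 0 := ne_of_gt hφp0
      have h2 : ρ ≠ 0 := ne_of_gt hρ0
      field_simp
      rw [hρ_def]
      ring
    -- pointwise decomposition
    set G1 : Ω → ℝ := fun ω => Real.exp (t * Y ω) * Real.exp (t * c * (1 - p ω)) with hG1_def
    set G0 : Ω → ℝ := fun ω => Real.exp (t * Y ω) * Real.exp (-(t * c * p ω)) with hG0_def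
    have hpw : ∀ ω, Real.exp (t * ((betaH w R (k + 1) m ω - a) / varphi (wnorm w) γ η (k + 1 - 1)))
        = G1 ω * Ind ω + (G0 ω - G0 ω * Ind ω) := by
      intro ω
      have hk1 : k + 1 - 1 = k := rfl
      rw [hk1, ← hφ_def, betaH_succ w R m hw hw1 k hk ω, alg (betaH w R k m ω)]
      by_cases h : R (k + 1) ω = m
      · have hIv : Ind ω = 1 := by simp [hInd_def, h]
        rw [show (if R (k + 1) ω = m then (1:ℝ) else 0) = 1 from by simp [h], hIv]
        rw [show t * ((betaH w R k m ω - a) / φp + c * (1 - p ω)) = t * Y ω + t * c * (1 - p ω) from by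
          rw [hY_def, hp_def]; ring]
        rw [Real.exp_add, hG1_def]
        ring
      · have hIv : Ind ω = 0 := by simp [hInd_def, h]
        rw [show (if R (k + 1) ω = m then (1:ℝ) else 0) = 0 from by simp [h], hIv]
        rw [show t * ((betaH w R k m ω - a) / φp + c * (0 - p ω)) = t * Y ω + -(t * c * p ω) from by
          rw [hY_def, hp_def]; ring]
        rw [Real.exp_add, hG0_def]
        ring
    -- measurability and bounds
    have hbmeas : Measurable (betaH w R k m) := measurable_betaH w R hRmeas k m
    have hYmeas : Measurable Y := (hbmeas.sub_const a).div_const φp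
    have hpmeas : Measurable p := by
      apply Measurable.add_const
      apply Measurable.const_mul
      exact ((hbmeas.const_mul _).add_const _)
    have hG1meas : Measurable G1 :=
      (Real.measurable_exp.comp (hYmeas.const_mul t)).mul
        (Real.measurable_exp.comp ((((hpmeas.const_sub 1)).const_mul (t * c))))
    have hG0meas : Measurable G0 :=
      (Real.measurable_exp.comp (hYmeas.const_mul t)).mul
        (Real.measurable_exp.comp (((hpmeas.const_mul (t * c)).neg)))
    have hIndmeas : Measurable Ind := measurable_ind R hRmeas (k + 1) m
    set B := Real.exp (|t| / φp + |t * c|) with hB_def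
    have hB0 : 0 ≤ B := Real.exp_nonneg _
    have hGbd : ∀ ω, |G1 ω| ≤ B ∧ |G0 ω| ≤ B := by
      intro ω
      obtain ⟨hp0, hp1⟩ := hpmem ω
      have hY1 := hYbd ω
      have h1 : t * Y ω ≤ |t| / φp := by
        calc t * Y ω ≤ |t * Y ω| := le_abs_self _
          _ = |t| * |Y ω| := abs_mul t (Y ω)
          _ ≤ |t| * (1 / φp) := by
              apply mul_le_mul_of_nonneg_left hY1 (abs_nonneg t)
          _ = |t| / φp := by ring
      have h2 : t * c * (1 - p ω) ≤ |t * c| := by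
        calc t * c * (1 - p ω) ≤ |t * c * (1 - p ω)| := le_abs_self _
          _ = |t * c| * |1 - p ω| := abs_mul _ _
          _ ≤ |t * c| * 1 := by
              apply mul_le_mul_of_nonneg_left _ (abs_nonneg _)
              rw [abs_le]; constructor <;> linarith
          _ = |t * c| := mul_one _
      have h3 : -(t * c * p ω) ≤ |t * c| := by
        calc -(t * c * p ω) ≤ |t * c * p ω| := neg_le_abs _
          _ = |t * c| * |p ω| := abs_mul _ _
          _ ≤ |t * c| * 1 := by
              apply mul_le_mul_of_nonneg_left _ (abs_nonneg _)
              rw [abs_le]; constructor <;> linarith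
          _ = |t * c| := mul_one _
      constructor
      · have e1 : G1 ω = Real.exp (t * Y ω + t * c * (1 - p ω)) := by
          rw [Real.exp_add]
        rw [e1, abs_of_pos (Real.exp_pos _), hB_def]
        exact Real.exp_le_exp.2 (add_le_add h1 h2)
      · have e0 : G0 ω = Real.exp (t * Y ω + -(t * c * p ω)) := by
          rw [Real.exp_add]
        rw [e0, abs_of_pos (Real.exp_pos _), hB_def]
        exact Real.exp_le_exp.2 (add_le_add h1 h3)
    have hIndbd : ∀ ω, |Ind ω| ≤ 1 := by
      intro ω; rcases hIndmem ω with h | h <;> rw [h] <;> norm_num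
    have hG1int : Integrable G1 μ := integrable_bdd μ hG1meas B (fun ω => (hGbd ω).1)
    have hG0int : Integrable G0 μ := integrable_bdd μ hG0meas B (fun ω => (hGbd ω).2)
    have hIndint : Integrable Ind μ := integrable_bdd μ hIndmeas 1 hIndbd
    have hG1Iint : Integrable (fun ω => G1 ω * Ind ω) μ := by
      apply integrable_bdd μ (hG1meas.mul hIndmeas) B
      intro ω
      calc |G1 ω * Ind ω| = |G1 ω| * |Ind ω| := abs_mul _ _
        _ ≤ B * 1 := mul_le_mul (hGbd ω).1 (hIndbd ω) (abs_nonneg _) hB0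
        _ = B := mul_one B
    have hG0Iint : Integrable (fun ω => G0 ω * Ind ω) μ := by
      apply integrable_bdd μ (hG0meas.mul hIndmeas) B
      intro ω
      calc |G0 ω * Ind ω| = |G0 ω| * |Ind ω| := abs_mul _ _
        _ ≤ B * 1 := mul_le_mul (hGbd ω).2 (hIndbd ω) (abs_nonneg _) hB0
        _ = B := mul_one B
    have hG1pint : Integrable (fun ω => G1 ω * p ω) μ := by
      apply integrable_bdd μ (hG1meas.mul hpmeas) B
      intro ω
      obtain ⟨hp0, hp1⟩ := hpmem ω
      calc |G1 ω * p ω| = |G1 ω| * |p ω| := abs_mul _ _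
        _ ≤ B * 1 := mul_le_mul (hGbd ω).1 (abs_le.2 ⟨by linarith, hp1⟩) (abs_nonneg _) hB0
        _ = B := mul_one B
    have hG0pint : Integrable (fun ω => G0 ω * p ω) μ := by
      apply integrable_bdd μ (hG0meas.mul hpmeas) B
      intro ω
      obtain ⟨hp0, hp1⟩ := hpmem ω
      calc |G0 ω * p ω| = |G0 ω| * |p ω| := abs_mul _ _
        _ ≤ B * 1 := mul_le_mul (hGbd ω).2 (abs_le.2 ⟨by linarith, hp1⟩) (abs_nonneg _) hB0
        _ = B := mul_one B
    -- Hsig-strong-measurability of G1, G0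
    have hbsm : StronglyMeasurable[Hsig R k] (betaH w R k m) :=
      (measurable_Hsig_betaH w R k m).stronglyMeasurable
    have hYsm : StronglyMeasurable[Hsig R k] Y := by
      have : Y = fun ω => (betaH w R k m ω - a) * φp⁻¹ := by
        funext ω
        show (betaH w R k m ω - a) / φp = _
        rw [div_eq_mul_inv]
      rw [this]
      exact ((hbsm.sub stronglyMeasurable_const).mul stronglyMeasurable_const)
    have hpsm : StronglyMeasurable[Hsig R k] p := by
      rw [hp_def]
      exact ((stronglyMeasurable_const.mul
        ((stronglyMeasurable_const.mul hbsm).add stronglyMeasurable_const)).add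
          stronglyMeasurable_const)
    have hexpsm : ∀ f : Ω → ℝ, StronglyMeasurable[Hsig R k] f →
        StronglyMeasurable[Hsig R k] (fun ω => Real.exp (f ω)) := by
      intro f hf
      exact Real.continuous_exp.comp_stronglyMeasurable hf
    have hG1sm : StronglyMeasurable[Hsig R k] G1 := by
      rw [hG1_def]
      exact (hexpsm _ (stronglyMeasurable_const.mul hYsm)).mul
        (hexpsm _ (stronglyMeasurable_const.mul (stronglyMeasurable_const.sub hpsm)))
    have hG0sm : StronglyMeasurable[Hsig R k] G0 := by
      rw [hG0_def]
      exact (hexpsm _ (stronglyMeasurable_const.mul hYsm)).mul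
        (hexpsm _ ((stronglyMeasurable_const.mul hpsm).neg))
    -- pull-out property
    have hmle := Hsig_le R hRmeas k
    have pull : ∀ G : Ω → ℝ, StronglyMeasurable[Hsig R k] G →
        Integrable G μ → Integrable (fun ω => G ω * Ind ω) μ →
        ∫ ω, G ω * Ind ω ∂μ = ∫ ω, G ω * p ω ∂μ := by
      intro G hGsm hGint hGIint
      have h1 : ∫ ω, G ω * Ind ω ∂μ = ∫ ω, (μ[(fun ω => G ω * Ind ω)|Hsig R k]) ω ∂μ :=
        (integral_condExp hmle (f := fun ω => G ω * Ind ω)).symm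
      have h2 : μ[(fun ω => G ω * Ind ω)|Hsig R k] =ᵐ[μ] fun ω => G ω * (μ[Ind|Hsig R k]) ω := by
        have := condExp_mul_of_stronglyMeasurable_left hGsm (by exact hGIint) hIndint
        exact this
      have h3 : μ[Ind|Hsig R k] =ᵐ[μ] p := hmodel k hk
      have h4 : (fun ω => G ω * (μ[Ind|Hsig R k]) ω) =ᵐ[μ] fun ω => G ω * p ω := by
        filter_upwards [h3] with ω hω
        rw [hω]
      rw [h1, integral_congr_ae (h2.trans h4)]
    -- main computation
    have hsplit : ∫ ω, Real.exp (t * ((betaH w R (k + 1) m ω - a) /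
          varphi (wnorm w) γ η (k + 1 - 1))) ∂μ
        = (∫ ω, G1 ω * Ind ω ∂μ) + ((∫ ω, G0 ω ∂μ) - ∫ ω, G0 ω * Ind ω ∂μ) := by
      have hsub : Integrable (fun ω => G0 ω - G0 ω * Ind ω) μ := hG0int.sub hG0Iint
      rw [integral_congr_ae (ae_of_all _ hpw)]
      rw [integral_add hG1Iint hsub, integral_sub hG0int hG0Iint]
    rw [hsplit, pull G1 hG1sm hG1int hG1Iint, pull G0 hG0sm hG0int hG0Iint]
    have hcomb : (∫ ω, G1 ω * p ω ∂μ) + ((∫ ω, G0 ω ∂μ) - ∫ ω, G0 ω * p ω ∂μ)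
        = ∫ ω, Real.exp (t * Y ω) *
            (p ω * Real.exp (t * c * (1 - p ω)) + (1 - p ω) * Real.exp (-(t * c * p ω))) ∂μ := by
      have hsub : Integrable (fun ω => G0 ω - G0 ω * p ω) μ := hG0int.sub hG0pint
      rw [← integral_sub hG0int hG0pint, ← integral_add hG1pint hsub]
      apply integral_congr_ae (ae_of_all _ _)
      intro ω
      simp only [hG1_def, hG0_def]
      ring
    rw [hcomb]
    have hmono : ∫ ω, Real.exp (t * Y ω) *
            (p ω * Real.exp (t * c * (1 - p ω)) + (1 - p ω) * Real.exp (-(t * c * p ω))) ∂μ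
        ≤ ∫ ω, Real.exp (t * Y ω) * Real.exp ((t * c) ^ 2 / 8) ∂μ := by
      apply integral_mono _ _ _
      · have : (fun ω => Real.exp (t * Y ω) *
            (p ω * Real.exp (t * c * (1 - p ω)) + (1 - p ω) * Real.exp (-(t * c * p ω))))
            = fun ω => G1 ω * p ω + (G0 ω - G0 ω * p ω) := by
          funext ω
          simp only [hG1_def, hG0_def]
          ring
        rw [this]
        have hsub : Integrable (fun ω => G0 ω - G0 ω * p ω) μ := hG0int.sub hG0pint
        exact hG1pint.add hsub
      · refine (integrable_bdd μ (f := fun ω => Real.exp (t * Y ω))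
          (Real.measurable_exp.comp (hYmeas.const_mul t))
          (Real.exp (|t| / φp)) (fun ω => by
            show |Real.exp (t * Y ω)| ≤ _
            rw [abs_of_pos (Real.exp_pos _)]
            apply Real.exp_le_exp.2
            calc t * Y ω ≤ |t * Y ω| := le_abs_self _
              _ = |t| * |Y ω| := abs_mul _ _
              _ ≤ |t| * (1 / φp) := mul_le_mul_of_nonneg_left (hYbd ω) (abs_nonneg t)
              _ = |t| / φp := by ring)).mul_const _
      · intro ω
        apply mul_le_mul_of_nonneg_left _ (Real.exp_nonneg _)
        exact bern_mgf (p ω) (t * c) ⟨(hpmem ω).1, (hpmem ω).2⟩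
    apply le_trans hmono
    rw [integral_mul_const]
    have hfinal : (∫ ω, Real.exp (t * Y ω) ∂μ) * Real.exp ((t * c) ^ 2 / 8)
        ≤ Real.exp (t ^ 2 * (∑ j ∈ Finset.Icc 1 k,
            (wnorm w j) ^ 2 / (varphi (wnorm w) γ η (j - 1)) ^ 2) / 8)
          * Real.exp ((t * c) ^ 2 / 8) := by
      apply mul_le_mul_of_nonneg_right _ (Real.exp_nonneg _)
      simpa [hY_def] using ih
    apply le_trans hfinal
    rw [← Real.exp_add]
    apply le_of_eq
    congr 1
    have hsum : (∑ j ∈ Finset.Icc 1 (k + 1),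
          (wnorm w j) ^ 2 / (varphi (wnorm w) γ η (j - 1)) ^ 2)
        = (∑ j ∈ Finset.Icc 1 k, (wnorm w j) ^ 2 / (varphi (wnorm w) γ η (j - 1)) ^ 2)
          + (wnorm w (k + 1)) ^ 2 / (varphi (wnorm w) γ η (k + 1 - 1)) ^ 2 :=
      Finset.sum_Icc_succ_top (by omega) _
    rw [hsum]
    have hk1 : k + 1 - 1 = k := rfl
    rw [hk1, ← hφ_def]
    rw [hc_def]
    have hφne : φ ≠ 0 := ne_of_gt hφ0
    field_simp

end MGF


set_option maxHeartbeats 2000000 in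
/-- Under the linear herding model with no misbehaving ratings and
Condition (2), for every `ε ∈ [0,1]`, `m ∈ 𝓜`, `i ≥ 1`:
`P[ |β_{i,m} − α_m| > ε ] ≤ 2 exp(−φ_i ε²)`. -/
theorem stmt_3
    {Ω : Type*} [MeasurableSpace Ω] (μ : Measure Ω) [IsProbabilityMeasure μ]
    (M : ℕ) (hM : 1 ≤ M)
    (α : ℕ → ℝ) (hα : ∀ m ∈ Finset.Icc 1 M, α m ∈ Set.Icc (0 : ℝ) 1)
    (hα1 : ∑ m ∈ Finset.Icc 1 M, α m = 1)
    (R : ℕ → Ω → ℕ) (hRrange : ∀ i, 1 ≤ i → ∀ ω, R i ω ∈ Finset.Icc 1 M)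
    (hRmeas : ∀ i, Measurable (R i))
    (w : ℕ → ℝ) (hw : ∀ j, 0 ≤ w j) (hw1 : 0 < w 1)
    (γ : ℕ → ℝ) (hγ : ∀ i, γ i ∈ Set.Icc (0 : ℝ) 1)
    (hγsup : ∃ g, g < 1 ∧ ∀ i, γ i ≤ g)
    (η : ℕ → ℝ) (hη : ∀ i, η i ∈ Set.Icc (0 : ℝ) 1)
    -- `θ_0 = α`: the first rating is unbiased, `P[R_1 = m] = α_m`
    (hR1 : ∀ m ∈ Finset.Icc 1 M, μ {ω | R 1 ω = m} = ENNReal.ofReal (α m))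
    -- linear herding model:
    -- `P[R_{i+1} = m | 𝓗_i] = γ_i ((1 − η_i) β_{i,m} + η_i α_m) + (1 − γ_i) α_m` a.s.
    (hmodel : ∀ i : ℕ, 1 ≤ i → ∀ m ∈ Finset.Icc 1 M,
      μ[(fun ω => if R (i + 1) ω = m then (1 : ℝ) else 0) | Hsig R i]
        =ᵐ[μ] fun ω =>
          γ i * ((1 - η i) * betaH w R i m ω + η i * α m) + (1 - γ i) * α m)
    -- Condition (2): `∑ w̃_i = ∞` and `∑ w̃_i² < ∞`
    (hdiv : Tendsto (fun n => ∑ i ∈ Finset.Icc 1 n, wnorm w i) atTop atTop)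
    (hsq : Summable fun i : ℕ => (wnorm w (i + 1)) ^ 2) :
    ∀ ε ∈ Set.Icc (0 : ℝ) 1, ∀ m ∈ Finset.Icc 1 M, ∀ i : ℕ, 1 ≤ i →
      μ {ω | ε < |betaH w R i m ω - α m|}
        ≤ ENNReal.ofReal (2 * Real.exp (-(phiSpeed (wnorm w) γ η i) * ε ^ 2)) := by
  intro ε hε m hm i hi
  obtain ⟨hε0, hε1⟩ := hε
  set a := α m with ha_def
  set φ := varphi (wnorm w) γ η (i - 1) with hφ_def
  obtain ⟨hφ0, hφ1⟩ := varphi_pos w γ η hw hw1 hγ hη (i - 1)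
  set V := ∑ j ∈ Finset.Icc 1 i, (wnorm w j) ^ 2 / (varphi (wnorm w) γ η (j - 1)) ^ 2 with hV_def
  have hV1 : 1 ≤ V := by
    have h1 : (wnorm w 1) ^ 2 / (varphi (wnorm w) γ η (1 - 1)) ^ 2 = 1 := by
      simp [wnorm_one w hw1, varphi]
    rw [hV_def]
    calc (1:ℝ) = (wnorm w 1) ^ 2 / (varphi (wnorm w) γ η (1 - 1)) ^ 2 := h1.symm
      _ ≤ _ := by
        apply Finset.single_le_sum (f := fun j => (wnorm w j) ^ 2 / (varphi (wnorm w) γ η (j - 1)) ^ 2)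
        · intro j _
          positivity
        · simp [Finset.mem_Icc]; omega
  have hV0 : 0 < V := by linarith
  set X : Ω → ℝ := fun ω => (betaH w R i m ω - a) / φ with hX_def
  set s := ε / φ with hs_def
  have hs0 : 0 ≤ s := div_nonneg hε0 hφ0.le
  set t₀ := 4 * s / V with ht0_def
  have ht00 : 0 ≤ t₀ := by positivity
  -- mgf bound
  have hmgf : ∀ t : ℝ, ∫ ω, Real.exp (t * X ω) ∂μ ≤ Real.exp (t ^ 2 * V / 8) := by
    intro t
    exact mgf_bound μ a (hα m hm) m R hRmeas w hw hw1 γ η hγ hη (hR1 m hm)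
      (fun i' hi' => hmodel i' hi' m hm) t i hi
  have hXmeas : Measurable X := ((measurable_betaH w R hRmeas i m).sub_const a).div_const φ
  have hXbd : ∀ ω, |X ω| ≤ 1 / φ := by
    intro ω
    obtain ⟨hb0, hb1⟩ := betaH_mem w R m hw hw1 i hi ω
    obtain ⟨ha0, ha1⟩ := hα m hm
    rw [← ha_def] at ha0 ha1
    rw [hX_def, abs_div, abs_of_pos hφ0, div_le_div_iff_of_pos_right hφ0]
    rw [abs_le]; constructor <;> nlinarith
  have hint : ∀ t : ℝ, Integrable (fun ω => Real.exp (t * X ω)) μ := by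
    intro t
    apply integrable_bdd μ (f := fun ω => Real.exp (t * X ω))
      (Real.measurable_exp.comp (hXmeas.const_mul t)) (Real.exp (|t| / φ))
    intro ω
    rw [abs_of_pos (Real.exp_pos _)]
    apply Real.exp_le_exp.2
    calc t * X ω ≤ |t * X ω| := le_abs_self _
      _ = |t| * |X ω| := abs_mul _ _
      _ ≤ |t| * (1 / φ) := mul_le_mul_of_nonneg_left (hXbd ω) (abs_nonneg t)
      _ = |t| / φ := by ring
  -- Chernoff for X
  have hexpeq : Real.exp (-t₀ * s) * Real.exp (t₀ ^ 2 * V / 8) = Real.exp (-(2 * s ^ 2 / V)) := by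
    rw [← Real.exp_add]
    congr 1
    rw [ht0_def]
    field_simp
    ring
  have up : (μ {ω | s ≤ X ω}).toReal ≤ Real.exp (-(2 * s ^ 2 / V)) := by
    have h1 := ProbabilityTheory.measure_ge_le_exp_mul_mgf (X := X) (μ := μ) s ht00 (hint t₀)
    have h2 : ProbabilityTheory.mgf X μ t₀ ≤ Real.exp (t₀ ^ 2 * V / 8) := hmgf t₀
    calc (μ {ω | s ≤ X ω}).toReal ≤ Real.exp (-t₀ * s) * ProbabilityTheory.mgf X μ t₀ := h1
      _ ≤ Real.exp (-t₀ * s) * Real.exp (t₀ ^ 2 * V / 8) :=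
          mul_le_mul_of_nonneg_left h2 (Real.exp_nonneg _)
      _ = Real.exp (-(2 * s ^ 2 / V)) := hexpeq
  have down : (μ {ω | s ≤ -X ω}).toReal ≤ Real.exp (-(2 * s ^ 2 / V)) := by
    have hintneg : Integrable (fun ω => Real.exp (t₀ * -X ω)) μ := by
      have heq : (fun ω => Real.exp (t₀ * -X ω)) = fun ω => Real.exp (-t₀ * X ω) := by
        funext ω
        rw [mul_neg, neg_mul]
      rw [heq]
      exact hint (-t₀)
    have h1 := ProbabilityTheory.measure_ge_le_exp_mul_mgf (X := fun ω => -X ω) (μ := μ) s ht00 hintneg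
    have h2 : ProbabilityTheory.mgf (fun ω => -X ω) μ t₀ ≤ Real.exp (t₀ ^ 2 * V / 8) := by
      have heq : ProbabilityTheory.mgf (fun ω => -X ω) μ t₀ = ∫ ω, Real.exp (-t₀ * X ω) ∂μ := by
        apply integral_congr_ae (ae_of_all _ _)
        intro ω
        rw [mul_neg, neg_mul]
      rw [heq]
      calc ∫ ω, Real.exp (-t₀ * X ω) ∂μ ≤ Real.exp ((-t₀) ^ 2 * V / 8) := hmgf (-t₀)
        _ = Real.exp (t₀ ^ 2 * V / 8) := by rw [neg_pow]; ring_nf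
    calc (μ {ω | s ≤ -X ω}).toReal ≤ Real.exp (-t₀ * s) * ProbabilityTheory.mgf (fun ω => -X ω) μ t₀ := h1
      _ ≤ Real.exp (-t₀ * s) * Real.exp (t₀ ^ 2 * V / 8) :=
          mul_le_mul_of_nonneg_left h2 (Real.exp_nonneg _)
      _ = Real.exp (-(2 * s ^ 2 / V)) := hexpeq
  -- union bound
  have hsub : {ω | ε < |betaH w R i m ω - a|} ⊆ {ω | s ≤ X ω} ∪ {ω | s ≤ -X ω} := by
    intro ω hω
    rw [Set.mem_setOf_eq] at hω
    have hXabs : s ≤ |X ω| := by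
      have habs : |X ω| = |betaH w R i m ω - a| / φ := by
        rw [hX_def, abs_div, abs_of_pos hφ0]
      rw [habs, hs_def, div_le_div_iff_of_pos_right hφ0]
      exact hω.le
    rcases abs_cases (X ω) with ⟨h, _⟩ | ⟨h, _⟩
    · left; rw [Set.mem_setOf_eq]; rw [h] at hXabs; exact hXabs
    · right; rw [Set.mem_setOf_eq]; rw [h] at hXabs; exact hXabs
  have hexpfin : Real.exp (-(2 * s ^ 2 / V)) = Real.exp (-(phiSpeed (wnorm w) γ η i) * ε ^ 2) := by
    congr 1
    rw [phiSpeed, hs_def, ← hφ_def, ← hV_def]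
    have hφne : φ ≠ 0 := ne_of_gt hφ0
    have hVne : V ≠ 0 := ne_of_gt hV0
    field_simp
  calc μ {ω | ε < |betaH w R i m ω - a|}
      ≤ μ ({ω | s ≤ X ω} ∪ {ω | s ≤ -X ω}) := measure_mono hsub
    _ ≤ μ {ω | s ≤ X ω} + μ {ω | s ≤ -X ω} := measure_union_le _ _
    _ ≤ ENNReal.ofReal (Real.exp (-(2 * s ^ 2 / V))) + ENNReal.ofReal (Real.exp (-(2 * s ^ 2 / V))) := by
        gcongr
        · exact (ENNReal.le_ofReal_iff_toReal_le (measure_ne_top μ _) (Real.exp_nonneg _)).2 up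
        · exact (ENNReal.le_ofReal_iff_toReal_le (measure_ne_top μ _) (Real.exp_nonneg _)).2 down
    _ = ENNReal.ofReal (2 * Real.exp (-(phiSpeed (wnorm w) γ η i) * ε ^ 2)) := by
        rw [← ENNReal.ofReal_add (Real.exp_nonneg _) (Real.exp_nonneg _), hexpfin]
        congr 1
        ring
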